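/- Let C, D, E, F, G, H > 0 and λ ∈ (0,1]. Define Q(p) = λ·C²·F·G·p^{1+3λ} + λ·C·(2·D·F + E)·G·p^{1+2λ} + λ·(D²·F·G + D·E·G + C·E)·p^{1+λ} − C²·F·H·p^{2λ} − C·(2·D·F + E)·H·p^{λ} − D·(D·F + E)·H for p > 0. Then Q has at most one root in (0, +∞); moreover, if p° is such a root then Q(p) < 0 for 0 < p < p° and Q(p) > 0 for p > p°. -/
import Mathlib


open Set Real

/-- the generalized polynomial `Q` has at most one positive root, and
`Q` is negative before that root and positive after it. -/
theorem generalized_polynomial_unique_root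
    (C D E F G H lam : ℝ)
    (hC : 0 < C) (hD : 0 < D) (hE : 0 < E) (hF : 0 < F) (hG : 0 < G) (hH : 0 < H)
    (hlam : lam ∈ Ioc (0 : ℝ) 1) :
    let Q : ℝ → ℝ := fun p =>
      lam * C ^ 2 * F * G * p ^ (1 + 3 * lam)
        + lam * C * (2 * D * F + E) * G * p ^ (1 + 2 * lam)
        + lam * (D ^ 2 * F * G + D * E * G + C * E) * p ^ (1 + lam)
        - C ^ 2 * F * H * p ^ (2 * lam)
        - C * (2 * D * F + E) * H * p ^ lam
        - D * (D * F + E) * H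
    {p : ℝ | 0 < p ∧ Q p = 0}.Subsingleton ∧
      ∀ p₀ : ℝ, 0 < p₀ → Q p₀ = 0 →
        (∀ p : ℝ, 0 < p → p < p₀ → Q p < 0) ∧ (∀ p : ℝ, p₀ < p → 0 < Q p) := by
  intro Q
  obtain ⟨hl0, hl1⟩ := hlam
  set R : ℝ → ℝ := fun p =>
    lam * C ^ 2 * F * G * p ^ (1 + lam)
      + lam * C * (2 * D * F + E) * G * p
      + lam * (D ^ 2 * F * G + D * E * G + C * E) * p ^ (1 - lam)
      - C ^ 2 * F * H
      - C * (2 * D * F + E) * H * p ^ (-lam)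
      - D * (D * F + E) * H * p ^ (-(2 * lam)) with hR
  have hQR : ∀ p : ℝ, 0 < p → Q p = p ^ (2 * lam) * R p := by
    intro p hp
    set q := p ^ lam with hqdef
    have hq : 0 < q := Real.rpow_pos_of_pos hp _
    have e1 : p ^ (1 + 3 * lam) = p * q ^ 3 := by
      rw [hqdef, show (1 + 3 * lam) = 1 + lam * 3 by ring, Real.rpow_add hp,
        Real.rpow_one, Real.rpow_mul hp.le,
        show ((3 : ℝ)) = ((3 : ℕ) : ℝ) by norm_num, Real.rpow_natCast]
    have e2 : p ^ (1 + 2 * lam) = p * q ^ 2 := by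
      rw [hqdef, show (1 + 2 * lam) = 1 + lam * 2 by ring, Real.rpow_add hp,
        Real.rpow_one, Real.rpow_mul hp.le,
        show ((2 : ℝ)) = ((2 : ℕ) : ℝ) by norm_num, Real.rpow_natCast]
    have e3 : p ^ (1 + lam) = p * q := by
      rw [hqdef, Real.rpow_add hp, Real.rpow_one]
    have e4 : p ^ (2 * lam) = q ^ 2 := by
      rw [hqdef, show (2 * lam) = lam * 2 by ring, Real.rpow_mul hp.le,
        show ((2 : ℝ)) = ((2 : ℕ) : ℝ) by norm_num, Real.rpow_natCast]
    have e6 : p ^ (1 - lam) = p * q⁻¹ := by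
      rw [hqdef, show (1 - lam) = 1 + (-lam) by ring, Real.rpow_add hp,
        Real.rpow_one, Real.rpow_neg hp.le]
    have e7 : p ^ (-lam) = q⁻¹ := by
      rw [hqdef, Real.rpow_neg hp.le]
    have e8 : p ^ (-(2 * lam)) = (q ^ 2)⁻¹ := by
      rw [Real.rpow_neg hp.le, e4]
    simp only [Q, hR, e1, e2, e3, e4, e6, e7, e8]
    field_simp
    ring
  have hmono : ∀ a b : ℝ, 0 < a → a < b → R a < R b := by
    intro a b ha hab
    have hb : 0 < b := ha.trans hab
    have h1 : lam * C ^ 2 * F * G * a ^ (1 + lam)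
        ≤ lam * C ^ 2 * F * G * b ^ (1 + lam) :=
      mul_le_mul_of_nonneg_left (Real.rpow_le_rpow ha.le hab.le (by linarith))
        (by positivity)
    have h2 : lam * C * (2 * D * F + E) * G * a
        < lam * C * (2 * D * F + E) * G * b :=
      mul_lt_mul_of_pos_left hab (by positivity)
    have h3 : lam * (D ^ 2 * F * G + D * E * G + C * E) * a ^ (1 - lam)
        ≤ lam * (D ^ 2 * F * G + D * E * G + C * E) * b ^ (1 - lam) :=
      mul_le_mul_of_nonneg_left (Real.rpow_le_rpow ha.le hab.le (by linarith))
        (by positivity)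
    have h5 : C * (2 * D * F + E) * H * b ^ (-lam)
        ≤ C * (2 * D * F + E) * H * a ^ (-lam) :=
      mul_le_mul_of_nonneg_left (Real.rpow_le_rpow_of_nonpos ha hab.le (by linarith))
        (by positivity)
    have h6 : D * (D * F + E) * H * b ^ (-(2 * lam))
        ≤ D * (D * F + E) * H * a ^ (-(2 * lam)) :=
      mul_le_mul_of_nonneg_left (Real.rpow_le_rpow_of_nonpos ha hab.le (by linarith))
        (by positivity)
    simp only [hR]
    linarith
  have key : ∀ p₀ : ℝ, 0 < p₀ → Q p₀ = 0 →
      (∀ p : ℝ, 0 < p → p < p₀ → Q p < 0) ∧ (∀ p : ℝ, p₀ < p → 0 < Q p) := by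
    intro p₀ hp₀ hQ0
    have hR0 : R p₀ = 0 := by
      have := hQR p₀ hp₀
      rw [hQ0] at this
      have hpos : (0 : ℝ) < p₀ ^ (2 * lam) := Real.rpow_pos_of_pos hp₀ _
      have := this.symm
      rcases mul_eq_zero.mp this with h | h
      · exact absurd h hpos.ne'
      · exact h
    constructor
    · intro p hp hlt
      rw [hQR p hp]
      exact mul_neg_of_pos_of_neg (Real.rpow_pos_of_pos hp _)
        (by have := hmono p p₀ hp hlt; linarith)
    · intro p hlt
      have hp : 0 < p := hp₀.trans hlt
      rw [hQR p hp]
      exact mul_pos (Real.rpow_pos_of_pos hp _)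
        (by have := hmono p₀ p hp₀ hlt; linarith)
  refine ⟨?_, key⟩
  intro a ha b hb
  obtain ⟨ha0, haQ⟩ := ha
  obtain ⟨hb0, hbQ⟩ := hb
  by_contra hne
  rcases lt_or_gt_of_ne hne with h | h
  · have := ((key a ha0 haQ).2 b h)
    rw [hbQ] at this; exact lt_irrefl _ this
  · have := ((key b hb0 hbQ).2 a h)
    rw [haQ] at this; exact lt_irrefl _ this
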